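/- Let x ∈ ℝ, n ≥ 1, let λ₁, …, λₙ be pairwise distinct real numbers, let ϑ : ℝ → ℂ be any function, and let R > max_j |λ_j|. Define the discrete sine kernel S by S(λ, μ) = ϑ(μ) · sin(x(λ − μ)/2) / (π(λ − μ)) for λ ≠ μ and S(λ, λ) = ϑ(λ) · x / (2π). Then (1/(2πi)^{2n}) ∮ … ∮ ∏_{j=1}^{n} [ϑ(λ_j) e^{ix(λ_j − z_j)} / (λ_j − z_j)] · det[(z_k − λ_j)^{−1}]_{j,k=1}^{n} dz_n … dz_1 = det[S(λ_j, λ_k)]_{j,k=1}^{n}, where each variable z₁, …, zₙ is integrated once counterclockwise around the circle |z| = R. -/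

import Mathlib

open MeasureTheory

/-- Iterated counterclockwise contour integral over the circle `|z - c| = R`
in each of the `n` variables. -/
noncomputable def iterCircleIntegral : (n : ℕ) → ((Fin n → ℂ) → ℂ) → ℂ → ℝ → ℂ
  | 0, f, _, _ => f Fin.elim0
  | n + 1, f, c, R =>
      circleIntegral (fun z => iterCircleIntegral n (fun w => f (Fin.cons z w)) c R) c R

open Complex Metric Finset

/-- The value of the basic contour integral, divided by `2πi`. -/
noncomputable def kerE (x : ℝ) (a b : ℂ) : ℂ :=
  if a = b then I * x else (Complex.exp (I * x * (a - b)) - 1) / (a - b)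

private lemma two_pi_I_ne_zero' : (2 * (Real.pi : ℂ) * I) ≠ 0 := by
  simp [Real.pi_ne_zero, I_ne_zero, Complex.ofReal_ne_zero]

private lemma ci_const_mul {f : ℂ → ℂ} {c : ℂ} {R : ℝ} (b : ℂ)
    (hf : CircleIntegrable f c R) : CircleIntegrable (fun z => b * f z) c R :=
  IntervalIntegrable.const_mul hf b

private lemma ci_sum {ι : Type*} (s : Finset ι) (f : ι → ℂ → ℂ) {c : ℂ} {R : ℝ}
    (h : ∀ i ∈ s, CircleIntegrable (f i) c R) :
    CircleIntegrable (fun z => ∑ i ∈ s, f i z) c R := by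
  classical
  induction s using Finset.induction with
  | empty => simpa using circleIntegrable_const (0 : ℂ) c R
  | @insert a s ha ih =>
      simp only [Finset.sum_insert ha]
      exact (h a (Finset.mem_insert_self a s)).add
        (ih fun i hi => h i (Finset.mem_insert_of_mem hi))

private lemma cint_add {f g : ℂ → ℂ} {c : ℂ} {R : ℝ} (hf : CircleIntegrable f c R)
    (hg : CircleIntegrable g c R) :
    (∮ z in C(c, R), (f z + g z)) = (∮ z in C(c, R), f z) + ∮ z in C(c, R), g z := by
  simp only [circleIntegral, smul_add, intervalIntegral.integral_add hf.out hg.out]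

private lemma cint_sum {ι : Type*} (s : Finset ι) (f : ι → ℂ → ℂ) {c : ℂ} {R : ℝ}
    (h : ∀ i ∈ s, CircleIntegrable (f i) c R) :
    (∮ z in C(c, R), ∑ i ∈ s, f i z) = ∑ i ∈ s, ∮ z in C(c, R), f i z := by
  classical
  induction s using Finset.induction with
  | empty => simp [circleIntegral]
  | @insert a s ha ih =>
      simp only [Finset.sum_insert ha]
      rw [cint_add (h a (Finset.mem_insert_self a s))
          (ci_sum s f fun i hi => h i (Finset.mem_insert_of_mem hi)),
        ih fun i hi => h i (Finset.mem_insert_of_mem hi)]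

/-- The basic Cauchy-type contour integral computation. -/
private lemma cauchyPair {R : ℝ} {a b : ℂ} (ha : a ∈ Metric.ball (0 : ℂ) R)
    (hb : b ∈ Metric.ball (0 : ℂ) R) (x : ℝ) :
    (∮ z in C(0, R), Complex.exp (I * x * (a - z)) / ((a - z) * (z - b)))
      = (2 * (Real.pi : ℂ) * I) * kerE x a b := by
  have hR : 0 < R := lt_of_le_of_lt (norm_nonneg a) (by simpa [mem_ball_zero_iff] using ha)
  have hfd : Differentiable ℂ (fun z : ℂ => Complex.exp (I * x * (a - z))) := by
    apply Complex.differentiable_exp.comp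
    exact (differentiable_const _).mul ((differentiable_const _).sub differentiable_id)
  by_cases hab : a = b
  · subst hab
    rw [kerE, if_pos rfl]
    have hfun : (fun z : ℂ => Complex.exp (I * x * (a - z)) / ((a - z) * (z - a)))
        = fun z => (-1 : ℂ) * (((z - a) ^ 2)⁻¹ * Complex.exp (I * x * (a - z))) := by
      funext z
      rw [show (a - z) * (z - a) = -((z - a) ^ 2) by ring, div_neg, div_eq_mul_inv,
        neg_one_mul, mul_comm (((z - a) ^ 2)⁻¹) _]
    rw [hfun, circleIntegral.integral_const_mul]
    have key := Complex.two_pi_I_inv_smul_circleIntegral_sub_sq_inv_smul_of_differentiable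
      isOpen_univ (Set.subset_univ (closedBall (0 : ℂ) R)) hfd.differentiableOn ha
    have hder : deriv (fun z : ℂ => Complex.exp (I * x * (a - z))) a = -(I * x) := by
      have h1 : HasDerivAt (fun z : ℂ => I * (x : ℂ) * (a - z)) (I * (x : ℂ) * (-1)) a :=
        ((hasDerivAt_id a).const_sub a).const_mul _
      have h2 := h1.cexp
      rw [h2.deriv]
      simp
    rw [hder] at key
    have key2 : (∮ z in C(0, R), ((z - a) ^ 2)⁻¹ • Complex.exp (I * x * (a - z)))
        = (2 * (Real.pi : ℂ) * I) * (-(I * x)) := by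
      rw [← key, smul_eq_mul, ← mul_assoc, mul_inv_cancel₀ two_pi_I_ne_zero', one_mul]
    simp only [smul_eq_mul] at key2
    rw [key2]
    ring
  · rw [kerE, if_neg hab]
    have hsub : a - b ≠ 0 := sub_ne_zero.2 hab
    have hZa : ∀ z ∈ sphere (0 : ℂ) R, z - a ≠ 0 := by
      intro z hz
      refine sub_ne_zero.2 fun h => ?_
      rw [mem_sphere_iff_norm, sub_zero] at hz
      rw [← h] at ha
      rw [mem_ball_zero_iff, hz] at ha
      exact lt_irrefl _ ha
    have hZb : ∀ z ∈ sphere (0 : ℂ) R, z - b ≠ 0 := by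
      intro z hz
      refine sub_ne_zero.2 fun h => ?_
      rw [mem_sphere_iff_norm, sub_zero] at hz
      rw [← h] at hb
      rw [mem_ball_zero_iff, hz] at hb
      exact lt_irrefl _ hb
    have hia : CircleIntegrable (fun z : ℂ => (z - a)⁻¹ * Complex.exp (I * x * (a - z))) 0 R := by
      apply ContinuousOn.circleIntegrable hR.le
      exact (((continuous_id.sub continuous_const).continuousOn).inv₀ hZa).mul
        (hfd.continuous.continuousOn)
    have hib : CircleIntegrable (fun z : ℂ => (z - b)⁻¹ * Complex.exp (I * x * (a - z))) 0 R := by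
      apply ContinuousOn.circleIntegrable hR.le
      exact (((continuous_id.sub continuous_const).continuousOn).inv₀ hZb).mul
        (hfd.continuous.continuousOn)
    have heq : Set.EqOn (fun z : ℂ => Complex.exp (I * x * (a - z)) / ((a - z) * (z - b)))
        (fun z : ℂ => (a - b)⁻¹ * ((z - b)⁻¹ * Complex.exp (I * x * (a - z))
          - (z - a)⁻¹ * Complex.exp (I * x * (a - z)))) (sphere (0 : ℂ) R) := by
      intro z hz
      have h1 : a - z ≠ 0 := by
        have := hZa z hz; intro h; apply this; rw [← neg_sub] at h
        exact neg_eq_zero.1 h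
      have h1' : z - a ≠ 0 := hZa z hz
      have h2 : z - b ≠ 0 := hZb z hz
      field_simp
      ring
    rw [circleIntegral.integral_congr hR.le heq, circleIntegral.integral_const_mul,
      circleIntegral.integral_sub hib hia]
    have hCa := DifferentiableOn.circleIntegral_sub_inv_smul
      (hfd.differentiableOn (s := closedBall (0 : ℂ) R)) ha
    have hCb := DifferentiableOn.circleIntegral_sub_inv_smul
      (hfd.differentiableOn (s := closedBall (0 : ℂ) R)) hb
    simp only [smul_eq_mul] at hCa hCb
    rw [hCa, hCb]
    have h3 : Complex.exp (I * x * (a - a)) = 1 := by simp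
    rw [h3]
    field_simp

private lemma iter_sum_prod {ι : Type*} (c : ℂ) (R : ℝ) :
    ∀ (n : ℕ) (s : Finset ι) (a : ι → ℂ) (F : ι → Fin n → ℂ → ℂ),
      (∀ i k, CircleIntegrable (F i k) c R) →
      iterCircleIntegral n (fun z => ∑ i ∈ s, a i * ∏ k, F i k (z k)) c R
        = ∑ i ∈ s, a i * ∏ k, (∮ z in C(c, R), F i k z)
  | 0, s, a, F, _ => by simp [iterCircleIntegral]
  | n + 1, s, a, F, hF => by
    rw [iterCircleIntegral]
    have h2 : ∀ z : ℂ,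
        iterCircleIntegral n (fun w => ∑ i ∈ s, a i * ∏ k, F i k ((Fin.cons z w : Fin (n+1) → ℂ) k)) c R
          = ∑ i ∈ s, (a i * ∏ k : Fin n, (∮ w in C(c, R), F i k.succ w)) * F i 0 z := by
      intro z
      have h1 : (fun w : Fin n → ℂ => ∑ i ∈ s, a i * ∏ k, F i k ((Fin.cons z w : Fin (n+1) → ℂ) k))
          = fun w => ∑ i ∈ s, (a i * F i 0 z) * ∏ k : Fin n, F i k.succ (w k) := by
        funext w
        refine Finset.sum_congr rfl fun i _ => ?_
        rw [Fin.prod_univ_succ]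
        simp [mul_assoc]
      rw [h1, iter_sum_prod c R n s (fun i => a i * F i 0 z) (fun i k => F i k.succ)
        (fun i k => hF i k.succ)]
      exact Finset.sum_congr rfl fun i _ => by ring
    simp only [h2]
    rw [cint_sum s _ (fun i _ => ci_const_mul _ (hF i 0))]
    refine Finset.sum_congr rfl fun i _ => ?_
    rw [circleIntegral.integral_const_mul, Fin.prod_univ_succ]
    ring

private lemma offdiag_identity (x p q : ℝ) (hpq : p ≠ q) :
    (2 * (Real.pi : ℂ) * I)⁻¹ * ((Complex.exp (I * x * ((p : ℂ) - q)) - 1) / ((p : ℂ) - q))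
      = (Complex.exp (I * x * (q : ℂ) / 2))⁻¹ * (Complex.exp (I * x * (p : ℂ) / 2) *
          ((Real.sin (x * (q - p) / 2) / (Real.pi * (q - p)) : ℝ) : ℂ)) := by
  have hπ : (Real.pi : ℂ) ≠ 0 := Complex.ofReal_ne_zero.2 Real.pi_ne_zero
  have hpq' : (p : ℂ) - q ≠ 0 := sub_ne_zero.2 (by exact_mod_cast hpq)
  have hqp' : (q : ℂ) - p ≠ 0 := sub_ne_zero.2 (by exact_mod_cast (Ne.symm hpq))
  set E : ℂ := Complex.exp (I * x * ((p : ℂ) - q) / 2) with hE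
  have hEne : E ≠ 0 := Complex.exp_ne_zero _
  have h2 : Complex.exp (I * x * ((p : ℂ) - q)) = E * E := by
    rw [hE, ← Complex.exp_add]; congr 1; ring
  have h3 : Complex.exp (I * x * (p : ℂ) / 2) = Complex.exp (I * x * (q : ℂ) / 2) * E := by
    rw [hE, ← Complex.exp_add]; congr 1; ring
  have hsin : ((Real.sin (x * (q - p) / 2) : ℝ) : ℂ) = (E - E⁻¹) * I / 2 := by
    rw [Complex.ofReal_sin]
    have e1 : Complex.exp (-(((x * (q - p) / 2 : ℝ)) : ℂ) * I) = E := by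
      rw [hE]; congr 1; push_cast; ring
    have e2 : Complex.exp ((((x * (q - p) / 2 : ℝ)) : ℂ) * I) = E⁻¹ := by
      rw [← Complex.exp_neg]; congr 1; push_cast; ring
    rw [Complex.sin, e1, e2]
  have hcast : ((Real.sin (x * (q - p) / 2) / (Real.pi * (q - p)) : ℝ) : ℂ)
      = ((Real.sin (x * (q - p) / 2) : ℝ) : ℂ) / ((Real.pi : ℂ) * ((q : ℂ) - p)) := by
    push_cast; ring
  rw [hcast, hsin, h2, h3]
  have hIne := Complex.I_ne_zero
  field_simp
  ring_nf
  rw [Complex.I_sq]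
  ring

theorem stmt2 (x : ℝ) (n : ℕ) (hn : 1 ≤ n) (lam : Fin n → ℝ)
    (hinj : Function.Injective lam)
    (ϑ : ℝ → ℂ) (R : ℝ) (hR : ∀ j, |lam j| < R)
    (S : Matrix (Fin n) (Fin n) ℂ)
    (hS : ∀ j k, S j k =
      if j = k then ϑ (lam j) * ((x / (2 * Real.pi) : ℝ) : ℂ)
      else ϑ (lam k) *
        ((Real.sin (x * (lam j - lam k) / 2) / (Real.pi * (lam j - lam k)) : ℝ) : ℂ)) :
    (1 / (2 * (Real.pi : ℂ) * Complex.I)) ^ (2 * n) *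
      iterCircleIntegral n (fun z => (∏ j, ϑ (lam j) *
          Complex.exp (Complex.I * (x : ℂ) * ((lam j : ℂ) - z j)) / ((lam j : ℂ) - z j)) *
        Matrix.det (Matrix.of fun j k => (z k - (lam j : ℂ))⁻¹)) 0 R = S.det := by
  classical
  have hR0 : 0 < R := lt_of_le_of_lt (abs_nonneg (lam ⟨0, hn⟩)) (hR ⟨0, hn⟩)
  have h2πI := two_pi_I_ne_zero'
  have hmem : ∀ j, ((lam j : ℝ) : ℂ) ∈ Metric.ball (0 : ℂ) R := by
    intro j
    rw [mem_ball_zero_iff]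
    simpa using hR j
  set F : Equiv.Perm (Fin n) → Fin n → ℂ → ℂ := fun σ k z =>
    ϑ (lam k) * (Complex.exp (I * x * ((lam k : ℂ) - z)) /
      (((lam k : ℂ) - z) * (z - (lam (σ k) : ℂ)))) with hFdef
  have hne : ∀ (j : Fin n) (z : ℂ), z ∈ sphere (0 : ℂ) R → (lam j : ℂ) ≠ z := by
    intro j z hz h
    rw [mem_sphere_iff_norm, sub_zero] at hz
    have h1 : ‖((lam j : ℝ) : ℂ)‖ < R := by simpa using hR j
    rw [h, hz] at h1
    exact lt_irrefl _ h1
  have hFi : ∀ σ k, CircleIntegrable (F σ k) 0 R := by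
    intro σ k
    apply ContinuousOn.circleIntegrable hR0.le
    apply continuousOn_const.mul
    apply ContinuousOn.div
    · exact (Complex.continuous_exp.comp (by fun_prop)).continuousOn
    · fun_prop
    · intro z hz
      exact mul_ne_zero (sub_ne_zero.2 (hne k z hz))
        (sub_ne_zero.2 (Ne.symm (hne (σ k) z hz)))
  have hfun : (fun z : Fin n → ℂ => (∏ j, ϑ (lam j) *
          Complex.exp (Complex.I * (x : ℂ) * ((lam j : ℂ) - z j)) / ((lam j : ℂ) - z j)) *
        Matrix.det (Matrix.of fun j k => (z k - (lam j : ℂ))⁻¹))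
      = fun z => ∑ σ : Equiv.Perm (Fin n),
          ((Equiv.Perm.sign σ : ℤ) : ℂ) * ∏ k, F σ k (z k) := by
    funext z
    rw [Matrix.det_apply', Finset.mul_sum]
    refine Finset.sum_congr rfl fun σ _ => ?_
    rw [mul_left_comm]
    congr 1
    rw [← Finset.prod_mul_distrib]
    refine Finset.prod_congr rfl fun k _ => ?_
    simp only [Matrix.of_apply, hFdef]
    simp only [div_eq_mul_inv, mul_inv]
    ring
  rw [hfun, iter_sum_prod 0 R n Finset.univ
    (fun σ => ((Equiv.Perm.sign σ : ℤ) : ℂ)) F hFi]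
  have hval : ∀ (σ : Equiv.Perm (Fin n)) (k : Fin n), (∮ z in C(0, R), F σ k z)
      = (2 * (Real.pi : ℂ) * I) * (ϑ (lam k) * kerE x (lam k) (lam (σ k))) := by
    intro σ k
    simp only [hFdef]
    rw [circleIntegral.integral_const_mul, cauchyPair (hmem k) (hmem (σ k)) x]
    ring
  simp only [hval]
  set A : Matrix (Fin n) (Fin n) ℂ := Matrix.of fun j k =>
    (2 * (Real.pi : ℂ) * I)⁻¹ * (ϑ (lam k) * kerE x (lam k) (lam j)) with hAdef
  have hprod : ∀ σ : Equiv.Perm (Fin n),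
      ∏ k, ((2 * (Real.pi : ℂ) * I) * (ϑ (lam k) * kerE x (lam k) (lam (σ k))))
        = (2 * (Real.pi : ℂ) * I) ^ (2 * n) * ∏ k, A (σ k) k := by
    intro σ
    simp only [hAdef, Matrix.of_apply]
    have hsplit : ∀ (c : ℂ) (w : Fin n → ℂ), ∏ k, c * w k = c ^ n * ∏ k, w k := by
      intro c w
      rw [Finset.prod_mul_distrib, Finset.prod_const, Finset.card_univ, Fintype.card_fin]
    rw [hsplit, hsplit, ← mul_assoc]
    congr 1
    rw [inv_pow, show 2 * n = n + n from two_mul n, pow_add,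
      mul_inv_cancel_right₀ (pow_ne_zero n h2πI)]
  calc (1 / (2 * (Real.pi : ℂ) * Complex.I)) ^ (2 * n) *
        ∑ σ : Equiv.Perm (Fin n), ((Equiv.Perm.sign σ : ℤ) : ℂ) *
          ∏ k, ((2 * (Real.pi : ℂ) * I) * (ϑ (lam k) * kerE x (lam k) (lam (σ k))))
      = (1 / (2 * (Real.pi : ℂ) * Complex.I)) ^ (2 * n) *
        ((2 * (Real.pi : ℂ) * I) ^ (2 * n) *
          ∑ σ : Equiv.Perm (Fin n), ((Equiv.Perm.sign σ : ℤ) : ℂ) * ∏ k, A (σ k) k) := by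
        congr 1
        rw [Finset.mul_sum]
        refine Finset.sum_congr rfl fun σ _ => ?_
        rw [hprod σ]; ring
    _ = ∑ σ : Equiv.Perm (Fin n), ((Equiv.Perm.sign σ : ℤ) : ℂ) * ∏ k, A (σ k) k := by
        rw [← mul_assoc, one_div, ← mul_pow, inv_mul_cancel₀ h2πI, one_pow, one_mul]
    _ = A.det := (Matrix.det_apply' A).symm
    _ = S.det := by
        have hAS : A = Matrix.of (fun j k =>
            (fun j' : Fin n => (Complex.exp (I * x * (lam j' : ℂ) / 2))⁻¹) j *
            ((Matrix.of fun j' k' => Complex.exp (I * x * (lam k' : ℂ) / 2) * S j' k') j k)) := by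
          ext j k
          simp only [hAdef, Matrix.of_apply]
          by_cases hjk : j = k
          · subst hjk
            rw [hS j j, if_pos rfl, kerE, if_pos rfl]
            have hπ : (Real.pi : ℂ) ≠ 0 := Complex.ofReal_ne_zero.2 Real.pi_ne_zero
            have hcast : ((x / (2 * Real.pi) : ℝ) : ℂ) = (x : ℂ) / (2 * (Real.pi : ℂ)) := by
              push_cast; ring
            rw [hcast]
            have hexp : Complex.exp (I * x * (lam j : ℂ) / 2) ≠ 0 := Complex.exp_ne_zero _
            have hIne := Complex.I_ne_zero
            field_simp
          · have hlk : (lam k : ℂ) ≠ (lam j : ℂ) := by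
              intro h
              exact hjk ((hinj (Complex.ofReal_inj.1 h)).symm)
            rw [hS j k, if_neg hjk, kerE, if_neg hlk]
            have key := offdiag_identity x (lam k) (lam j)
              (fun h => hjk ((hinj h).symm))
            linear_combination (ϑ (lam k)) * key
        rw [hAS, Matrix.det_mul_column, Matrix.det_mul_row, ← mul_assoc,
          ← Finset.prod_mul_distrib]
        simp [inv_mul_cancel₀ (Complex.exp_ne_zero _)]
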